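/- For every real number φ₀ there exist real numbers u₀ > 0 and v₀ > 0 such that d₁·log u₀ + θ₁·φ₀ + g₁₁·u₀ + g₁₂·v₀ = c₁ and d₂·log v₀ + θ₂·φ₀ + g₂₁·u₀ + g₂₂·v₀ = c₂. (Existence part of Theorem 2.3; no steric-determinant hypothesis is needed.) -/

import Mathlib

open Filter Real Topology

/-- Existence part of Theorem 2.3: for every `φ₀` there exist positive `u₀, v₀`
solving the algebraic system (AE). -/
theorem stmt_0 (d₁ d₂ θ₁ θ₂ g₁₁ g₁₂ g₂₁ g₂₂ c₁ c₂ : ℝ)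
    (hd₁ : 0 < d₁) (hd₂ : 0 < d₂) (hθ₁ : 0 < θ₁) (hθ₂ : θ₂ < 0)
    (hg₁₁ : 0 < g₁₁) (hg₁₂ : 0 < g₁₂) (hg₂₁ : 0 < g₂₁) (hg₂₂ : 0 < g₂₂) :
    ∀ φ₀ : ℝ, ∃ u₀ v₀ : ℝ, 0 < u₀ ∧ 0 < v₀ ∧
      d₁ * Real.log u₀ + θ₁ * φ₀ + g₁₁ * u₀ + g₁₂ * v₀ = c₁ ∧
      d₂ * Real.log v₀ + θ₂ * φ₀ + g₂₁ * u₀ + g₂₂ * v₀ = c₂ := by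
  intro φ₀
  set K₁ : ℝ := c₁ - θ₁ * φ₀ with hK₁
  set h : ℝ → ℝ := fun u => d₁ * Real.log u + g₁₁ * u with hh
  set w : ℝ → ℝ := fun u => (K₁ - d₁ * Real.log u - g₁₁ * u) / g₁₂ with hw
  set Φ : ℝ → ℝ := fun u => d₂ * Real.log (w u) + θ₂ * φ₀ + g₂₁ * u + g₂₂ * w u with hΦ
  -- h is strictly monotone on positives
  have hmono : ∀ x y : ℝ, 0 < x → x < y → h x < h y := by
    intro x y hx hxy
    have : Real.log x < Real.log y := Real.log_lt_log hx hxy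
    simp only [hh]
    nlinarith
  -- Step 1: find u* with h u* = K₁
  have h0 : Tendsto h (𝓝[>] (0:ℝ)) atBot := by
    have h1 : Tendsto (fun u : ℝ => d₁ * Real.log u) (𝓝[>] (0:ℝ)) atBot :=
      (Real.tendsto_log_nhdsGT_zero).const_mul_atBot hd₁
    have h2 : Tendsto (fun u : ℝ => g₁₁ * u) (𝓝[>] (0:ℝ)) (𝓝 (g₁₁ * 0)) :=
      ((continuous_const.mul continuous_id).tendsto 0).mono_left nhdsWithin_le_nhds
    exact h1.atBot_add h2
  have htop : Tendsto h atTop atTop := by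
    have h1 : Tendsto (fun u : ℝ => d₁ * Real.log u) atTop atTop :=
      Real.tendsto_log_atTop.const_mul_atTop hd₁
    have h2 : Tendsto (fun u : ℝ => g₁₁ * u) atTop atTop :=
      tendsto_id.const_mul_atTop hg₁₁
    exact Filter.Tendsto.atTop_add_atTop h1 h2
  obtain ⟨p, hp0, hpK⟩ : ∃ p : ℝ, 0 < p ∧ h p < K₁ := by
    have := (h0.eventually (eventually_lt_atBot K₁)).and self_mem_nhdsWithin
    obtain ⟨p, hp1, hp2⟩ := this.exists
    exact ⟨p, hp2, hp1⟩
  obtain ⟨q, hq0, hqK⟩ : ∃ q : ℝ, 0 < q ∧ K₁ < h q := by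
    have := (htop.eventually (eventually_gt_atTop K₁)).and (eventually_gt_atTop 0)
    obtain ⟨q, hq1, hq2⟩ := this.exists
    exact ⟨q, hq2, hq1⟩
  have hpq : p < q := by
    by_contra hle
    push_neg at hle
    rcases eq_or_lt_of_le hle with rfl | hlt
    · linarith
    · have := hmono q p hq0 hlt; linarith
  have hcont_h : ContinuousOn h (Set.Icc p q) := by
    apply ContinuousOn.add
    · exact continuousOn_const.mul (Real.continuousOn_log.mono (by
        intro x hx; exact ne_of_gt (lt_of_lt_of_le hp0 hx.1)))
    · exact continuousOn_const.mul continuousOn_id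
  obtain ⟨ustar, hustar_mem, hustar⟩ :=
    intermediate_value_Icc hpq.le hcont_h ⟨hpK.le, hqK.le⟩
  have hustar0 : 0 < ustar := lt_of_lt_of_le hp0 hustar_mem.1
  have hwstar : w ustar = 0 := by
    simp only [hw]
    rw [div_eq_zero_iff]
    left
    simp only [hh] at hustar
    linarith
  -- w is positive on (0, u*)
  have hwpos : ∀ u : ℝ, 0 < u → u < ustar → 0 < w u := by
    intro u hu huu
    have := hmono u ustar hu huu
    simp only [hh] at this hustar
    simp only [hw]
    apply div_pos _ hg₁₂
    linarith
  -- continuity of w away from 0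
  have hwcont : ∀ s : Set ℝ, (∀ x ∈ s, (0:ℝ) < x) → ContinuousOn w s := by
    intro s hs
    apply ContinuousOn.div _ continuousOn_const (fun x _ => ne_of_gt hg₁₂)
    apply ContinuousOn.sub
    apply ContinuousOn.sub continuousOn_const
    · exact continuousOn_const.mul (Real.continuousOn_log.mono (fun x hx => ne_of_gt (hs x hx)))
    · exact continuousOn_const.mul continuousOn_id
  -- Step 2: b ∈ (0, u*) with Φ b < c₂
  have hw_tendsto : Tendsto w (𝓝[<] ustar) (𝓝[>] (0:ℝ)) := by
    have hc : ContinuousAt w ustar := by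
      have : ContinuousOn w (Set.Ioi (0:ℝ)) := hwcont _ (fun x hx => hx)
      exact this.continuousAt (Ioi_mem_nhds hustar0)
    rw [tendsto_nhdsWithin_iff]
    constructor
    · have h' : Tendsto w (𝓝[<] ustar) (𝓝 (w ustar)) := hc.continuousWithinAt
      rw [hwstar] at h'
      exact h'
    · filter_upwards [self_mem_nhdsWithin,
        eventually_nhdsWithin_of_eventually_nhds (eventually_gt_nhds hustar0)] with x hx1 hx2
      exact hwpos x hx2 hx1
  have hΦbot : Tendsto Φ (𝓝[<] ustar) atBot := by
    have h1 : Tendsto (fun u => d₂ * Real.log (w u)) (𝓝[<] ustar) atBot :=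
      (Real.tendsto_log_nhdsGT_zero.comp hw_tendsto).const_mul_atBot hd₂
    have h2 : Tendsto (fun u => θ₂ * φ₀ + g₂₁ * u + g₂₂ * w u) (𝓝[<] ustar)
        (𝓝 (θ₂ * φ₀ + g₂₁ * ustar + g₂₂ * 0)) := by
      apply Tendsto.add
      apply Tendsto.add tendsto_const_nhds
      · exact (tendsto_const_nhds.mul tendsto_id).mono_left nhdsWithin_le_nhds
      · exact tendsto_const_nhds.mul (hw_tendsto.mono_right nhdsWithin_le_nhds)
    have : Tendsto (fun u => d₂ * Real.log (w u) + (θ₂ * φ₀ + g₂₁ * u + g₂₂ * w u))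
        (𝓝[<] ustar) atBot := h1.atBot_add h2
    refine this.congr (fun u => by simp only [hΦ]; ring)
  obtain ⟨b, hbΦ, hb_mem⟩ : ∃ b : ℝ, Φ b < c₂ ∧ b ∈ Set.Ioo 0 ustar := by
    have h1 := hΦbot.eventually (eventually_lt_atBot c₂)
    have h2 : Set.Ioo (0:ℝ) ustar ∈ 𝓝[<] ustar :=
      Ioo_mem_nhdsLT_of_mem ⟨hustar0, le_rfl⟩
    exact (h1.and (eventually_of_mem h2 (fun x hx => hx))).exists
  -- Step 3: a ∈ (0, b) with Φ a > c₂
  have hw_top : Tendsto w (𝓝[>] (0:ℝ)) atTop := by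
    have h1 : Tendsto (fun u : ℝ => -(d₁ * Real.log u)) (𝓝[>] (0:ℝ)) atTop :=
      tendsto_neg_atBot_atTop.comp (Real.tendsto_log_nhdsGT_zero.const_mul_atBot hd₁)
    have h2 : Tendsto (fun u : ℝ => K₁ - g₁₁ * u) (𝓝[>] (0:ℝ)) (𝓝 (K₁ - g₁₁ * 0)) :=
      (tendsto_const_nhds.sub (tendsto_const_nhds.mul tendsto_id)).mono_left nhdsWithin_le_nhds
    have h3 : Tendsto (fun u : ℝ => K₁ - d₁ * Real.log u - g₁₁ * u) (𝓝[>] (0:ℝ)) atTop := by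
      have := h1.atTop_add h2
      refine this.congr (fun u => by ring)
    exact h3.atTop_div_const hg₁₂
  have hΦtop : Tendsto Φ (𝓝[>] (0:ℝ)) atTop := by
    have h1 : Tendsto (fun u => d₂ * Real.log (w u)) (𝓝[>] (0:ℝ)) atTop :=
      (Real.tendsto_log_atTop.comp hw_top).const_mul_atTop hd₂
    have h2 : Tendsto (fun u => g₂₂ * w u) (𝓝[>] (0:ℝ)) atTop := hw_top.const_mul_atTop hg₂₂
    have h3 : Tendsto (fun u : ℝ => θ₂ * φ₀ + g₂₁ * u) (𝓝[>] (0:ℝ)) (𝓝 (θ₂ * φ₀ + g₂₁ * 0)) :=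
      (tendsto_const_nhds.add (tendsto_const_nhds.mul tendsto_id)).mono_left nhdsWithin_le_nhds
    have : Tendsto (fun u => (d₂ * Real.log (w u) + g₂₂ * w u) + (θ₂ * φ₀ + g₂₁ * u))
        (𝓝[>] (0:ℝ)) atTop := (Filter.Tendsto.atTop_add_atTop h1 h2).atTop_add h3
    refine this.congr (fun u => by simp only [hΦ]; ring)
  obtain ⟨a, haΦ, ha0, hab⟩ : ∃ a : ℝ, c₂ < Φ a ∧ 0 < a ∧ a < b := by
    have h1 := hΦtop.eventually (eventually_gt_atTop c₂)
    have h2 : Set.Ioo (0:ℝ) b ∈ 𝓝[>] (0:ℝ) :=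
      Ioo_mem_nhdsGT_of_mem ⟨le_rfl, hb_mem.1⟩
    obtain ⟨a, ha1, ha2, ha3⟩ := (h1.and (eventually_of_mem h2 (fun x hx => hx))).exists
    exact ⟨a, ha1, ha2, ha3⟩
  -- Step 4: IVT for Φ on [a, b]
  have hsub : ∀ x ∈ Set.Icc a b, 0 < x ∧ x < ustar := by
    intro x hx
    exact ⟨lt_of_lt_of_le ha0 hx.1, lt_of_le_of_lt hx.2 hb_mem.2⟩
  have hΦcont : ContinuousOn Φ (Set.Icc a b) := by
    have hwc : ContinuousOn w (Set.Icc a b) := hwcont _ (fun x hx => (hsub x hx).1)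
    apply ContinuousOn.add
    apply ContinuousOn.add
    apply ContinuousOn.add
    · exact continuousOn_const.mul (Real.continuousOn_log.comp hwc
        (fun x hx => ne_of_gt (hwpos x (hsub x hx).1 (hsub x hx).2)))
    · exact continuousOn_const
    · exact continuousOn_const.mul continuousOn_id
    · exact continuousOn_const.mul hwc
  obtain ⟨u₀, hu₀mem, hu₀⟩ :=
    intermediate_value_Icc' hab.le hΦcont ⟨hbΦ.le, haΦ.le⟩
  have hu₀pos : 0 < u₀ := (hsub u₀ hu₀mem).1
  have hwu₀ : 0 < w u₀ := hwpos u₀ hu₀pos (hsub u₀ hu₀mem).2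
  refine ⟨u₀, w u₀, hu₀pos, hwu₀, ?_, ?_⟩
  · have : g₁₂ * w u₀ = K₁ - d₁ * Real.log u₀ - g₁₁ * u₀ := by
      simp only [hw]; field_simp
    simp only [hK₁] at this
    linarith
  · simp only [hΦ] at hu₀
    linarith
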